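/- Let S be a multiset of K indices drawn i.i.d. from {1,...,m} with probabilities p_1,...,p_m summing to 1, and let Z^{(1)},...,Z^{(m)} ∈ ℝ^{d×r} have orthonormal columns. Define the zero-mean random matrix S_t = (1/K)∑_{i∈S} Z^{(i)} − ∑_{i=1}^m p_i Z^{(i)}. Then ‖E[S_t S_tᵀ]‖₂ ≤ (1/K)∑_{i≠j} p_i p_j + ∑_i p_i² + 1/K. -/

import Mathlib

open Matrix Finset

lemma pair_expect {m K : ℕ} (p : Fin m → ℝ) (hpsum : ∑ i, p i = 1)
    (g h : Fin m → ℝ) (k l : Fin K) :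
    ∑ f : Fin K → Fin m, (∏ j, p (f j)) * (g (f k) * h (f l)) =
      if k = l then ∑ i, p i * (g i * h i)
      else (∑ i, p i * g i) * (∑ i, p i * h i) := by
  have key : ∀ f : Fin K → Fin m,
      (∏ j, p (f j)) * (g (f k) * h (f l)) =
      ∏ j, (p (f j) * (if j = k then g (f j) else 1) * (if j = l then h (f j) else 1)) := by
    intro f
    rw [Finset.prod_mul_distrib, Finset.prod_mul_distrib, Finset.prod_ite_eq' univ k,
      Finset.prod_ite_eq' univ l]
    simp [mul_assoc]
  simp_rw [key]
  rw [← Fintype.prod_sum (f := fun j x => p x * (if j = k then g x else 1) * (if j = l then h x else 1))]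
  by_cases hkl : k = l
  · subst hkl
    rw [if_pos rfl]
    have hfac : ∀ j : Fin K,
        (∑ x, p x * (if j = k then g x else 1) * (if j = k then h x else 1)) =
          if j = k then ∑ x, p x * (g x * h x) else 1 := by
      intro j
      by_cases hj : j = k
      · simp [hj, mul_assoc]
      · simp [hj, hpsum]
    simp_rw [hfac]
    rw [Finset.prod_ite_eq' univ k, if_pos (mem_univ k)]
  · rw [if_neg hkl]
    have hfac : ∀ j : Fin K,
        (∑ x, p x * (if j = k then g x else 1) * (if j = l then h x else 1)) =
          (if j = k then ∑ x, p x * g x else 1) * (if j = l then ∑ x, p x * h x else 1) := by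
      intro j
      by_cases hjk : j = k
      · have hjl : j ≠ l := fun h => hkl (hjk ▸ h)
        simp [hjk, hjl, hkl, hpsum]
      · by_cases hjl : j = l
        · have : l ≠ k := fun h => hkl h.symm
          simp [hjk, hjl, this, hpsum]
        · simp [hjk, hjl, hpsum]
    simp_rw [hfac]
    rw [Finset.prod_mul_distrib, Finset.prod_ite_eq' univ k, Finset.prod_ite_eq' univ l]
    simp

lemma pair_expect_eq {m K : ℕ} (p : Fin m → ℝ) (hpsum : ∑ i, p i = 1)
    (g h : Fin m → ℝ) (k : Fin K) :
    ∑ f : Fin K → Fin m, (∏ j, p (f j)) * (g (f k) * h (f k)) =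
      ∑ i, p i * (g i * h i) := by
  simpa using pair_expect p hpsum g h k k

lemma pair_expect_ne {m K : ℕ} (p : Fin m → ℝ) (hpsum : ∑ i, p i = 1)
    (g h : Fin m → ℝ) {k l : Fin K} (hkl : k ≠ l) :
    ∑ f : Fin K → Fin m, (∏ j, p (f j)) * (g (f k) * h (f l)) =
      (∑ i, p i * g i) * (∑ i, p i * h i) := by
  simpa [hkl] using pair_expect p hpsum g h k l

lemma single_expect {m K : ℕ} (p : Fin m → ℝ) (hpsum : ∑ i, p i = 1)
    (g : Fin m → ℝ) (k : Fin K) :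
    ∑ f : Fin K → Fin m, (∏ j, p (f j)) * g (f k) = ∑ i, p i * g i := by
  have := pair_expect p hpsum g (fun _ => 1) k k
  simpa using this

lemma weight_sum {m K : ℕ} (p : Fin m → ℝ) (hpsum : ∑ i, p i = 1) (hK : 0 < K) :
    ∑ f : Fin K → Fin m, (∏ j, p (f j)) = 1 := by
  have := single_expect p hpsum (fun _ => 1) ⟨0, hK⟩
  simpa [hpsum] using this

/-- Spectral (operator) norm of a real matrix. -/
noncomputable def specNorm {a b : ℕ} (A : Matrix (Fin a) (Fin b) ℝ) : ℝ :=
  ‖LinearMap.toContinuousLinearMap (Matrix.toEuclideanLin A)‖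

open scoped Matrix.Norms.L2Operator

/-- Let `K` indices be drawn i.i.d. from `{1,…,m}` with probabilities
`p_1,…,p_m` summing to `1`, and let `Z⁽¹⁾,…,Z⁽ᵐ⁾ ∈ ℝ^{d×r}` have orthonormal columns.
For a sampled tuple `f`, set `S_t(f) = (1/K) ∑_k Z⁽ᶠ⁽ᵏ⁾⁾ − ∑_i p_i Z⁽ⁱ⁾`.  Then the
expectation `E[S_t S_tᵀ]` (the sum over tuples `f` weighted by `∏_k p_{f(k)}`) satisfies
`‖E[S_t S_tᵀ]‖₂ ≤ (1/K) ∑_{i ≠ j} p_i p_j + ∑_i p_i² + 1/K`. -/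
theorem sampling_variance_bound {d r m K : ℕ} (hK : 0 < K)
    (p : Fin m → ℝ) (hp : ∀ i, 0 ≤ p i) (hpsum : ∑ i, p i = 1)
    (Z : Fin m → Matrix (Fin d) (Fin r) ℝ)
    (hZ : ∀ i, (Z i)ᵀ * Z i = 1) :
    specNorm (∑ f : Fin K → Fin m,
        (∏ k, p (f k)) •
          ((((K : ℝ)⁻¹ • ∑ k, Z (f k)) - ∑ i, p i • Z i) *
            (((K : ℝ)⁻¹ • ∑ k, Z (f k)) - ∑ i, p i • Z i)ᵀ)) ≤
      (K : ℝ)⁻¹ * (∑ i, ∑ j ∈ Finset.univ.erase i, p i * p j) +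
        (∑ i, (p i) ^ 2) + (K : ℝ)⁻¹ := by
  set μ : Matrix (Fin d) (Fin r) ℝ := ∑ i, p i • Z i with hμ
  set V : Matrix (Fin d) (Fin d) ℝ := ∑ i, p i • (Z i * (Z i)ᵀ) with hV
  set M : Matrix (Fin d) (Fin d) ℝ := μ * μᵀ with hM
  -- E2: pairwise expectation
  have E2 : ∀ k l : Fin K,
      ∑ f : Fin K → Fin m, (∏ j, p (f j)) • (Z (f k) * (Z (f l))ᵀ)
        = if k = l then V else M := by
    intro k l
    ext a b
    have swap : (∑ f : Fin K → Fin m, (∏ j, p (f j)) • (Z (f k) * (Z (f l))ᵀ)) a b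
        = ∑ c, ∑ f : Fin K → Fin m, (∏ j, p (f j)) * (Z (f k) a c * Z (f l) b c) := by
      simp only [Matrix.sum_apply, Matrix.smul_apply, Matrix.mul_apply,
        Matrix.transpose_apply, smul_eq_mul, Finset.mul_sum]
      exact Finset.sum_comm
    rw [swap]
    by_cases hkl : k = l
    · subst hkl
      rw [if_pos rfl, Finset.sum_congr rfl
        fun c _ => pair_expect_eq p hpsum (fun i => Z i a c) (fun i => Z i b c) k]
      simp only [hV, Matrix.sum_apply, Matrix.smul_apply,
        Matrix.mul_apply, Matrix.transpose_apply, smul_eq_mul, Finset.mul_sum]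
      exact Finset.sum_comm
    · rw [if_neg hkl, Finset.sum_congr rfl
        fun c _ => pair_expect_ne p hpsum (fun i => Z i a c) (fun i => Z i b c) hkl]
      simp only [hM, Matrix.mul_apply, Matrix.transpose_apply, hμ,
        Matrix.sum_apply, Matrix.smul_apply, smul_eq_mul]
  have hK0 : (K:ℝ) ≠ 0 := Nat.cast_ne_zero.mpr hK.ne'
  -- E1: single expectation
  have E1 : ∀ k : Fin K, ∑ f : Fin K → Fin m, (∏ j, p (f j)) • Z (f k) = μ := by
    intro k
    ext a b
    simp only [Matrix.sum_apply, Matrix.smul_apply, smul_eq_mul, hμ]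
    exact single_expect p hpsum (fun i => Z i a b) k
  have hw1 : ∑ f : Fin K → Fin m, (∏ j, p (f j)) = 1 := weight_sum p hpsum hK
  -- expansion of the quadratic form
  have expand : ∀ f : Fin K → Fin m,
      (((K : ℝ)⁻¹ • ∑ k, Z (f k)) - μ) * (((K : ℝ)⁻¹ • ∑ k, Z (f k)) - μ)ᵀ
        = ((K:ℝ)⁻¹ * (K:ℝ)⁻¹) • ((∑ k, Z (f k)) * (∑ k, Z (f k))ᵀ)
          - (K:ℝ)⁻¹ • ((∑ k, Z (f k)) * μᵀ)
          - (K:ℝ)⁻¹ • (μ * (∑ k, Z (f k))ᵀ) + M := by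
    intro f
    rw [Matrix.transpose_sub, Matrix.transpose_smul, Matrix.sub_mul, Matrix.mul_sub,
      Matrix.mul_sub, Matrix.smul_mul, Matrix.mul_smul, Matrix.mul_smul, Matrix.smul_mul,
      smul_smul, hM]
    abel
  have hWW : ∑ f : Fin K → Fin m,
      (∏ j, p (f j)) • ((∑ k, Z (f k)) * (∑ k, Z (f k))ᵀ)
        = (K:ℝ) • V + ((K:ℝ) * (K:ℝ) - (K:ℝ)) • M := by
    have h1 : ∀ f : Fin K → Fin m,
        (∑ k, Z (f k)) * (∑ k, Z (f k))ᵀ = ∑ k, ∑ l, Z (f k) * (Z (f l))ᵀ := by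
      intro f
      rw [Matrix.transpose_sum, Matrix.sum_mul]
      exact Finset.sum_congr rfl fun k _ => Matrix.mul_sum _ _ _
    rw [Finset.sum_congr rfl fun f _ => by rw [h1 f]]
    rw [show (∑ f : Fin K → Fin m, (∏ j, p (f j)) • ∑ k, ∑ l, Z (f k) * (Z (f l))ᵀ)
        = ∑ k, ∑ l, ∑ f : Fin K → Fin m, (∏ j, p (f j)) • (Z (f k) * (Z (f l))ᵀ) from by
      simp_rw [Finset.smul_sum]
      rw [Finset.sum_comm]
      exact Finset.sum_congr rfl fun k _ => Finset.sum_comm]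
    rw [Finset.sum_congr rfl fun k _ => Finset.sum_congr rfl fun l _ => E2 k l]
    have h2 : ∀ k : Fin K, (∑ l : Fin K, if k = l then V else M)
        = (V - M) + (K:ℝ) • M := by
      intro k
      have : ∀ l : Fin K, (if k = l then V else M) = (if l = k then V - M else 0) + M := by
        intro l
        by_cases h : l = k
        · subst h; simp
        · rw [if_neg h, if_neg (fun hh => h hh.symm), zero_add]
      rw [Finset.sum_congr rfl fun l _ => this l, Finset.sum_add_distrib,
        Finset.sum_ite_eq' Finset.univ k, if_pos (Finset.mem_univ k),
        Finset.sum_const, Finset.card_univ, Fintype.card_fin,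
        ← Nat.cast_smul_eq_nsmul (R := ℝ)]
    rw [Finset.sum_congr rfl fun k _ => h2 k, Finset.sum_const, Finset.card_univ,
      Fintype.card_fin, ← Nat.cast_smul_eq_nsmul (R := ℝ)]
    match_scalars <;> ring
  have hWmu : ∑ f : Fin K → Fin m,
      (∏ j, p (f j)) • ((∑ k, Z (f k)) * μᵀ) = (K:ℝ) • M := by
    have h1 : ∀ f : Fin K → Fin m,
        (∏ j, p (f j)) • ((∑ k, Z (f k)) * μᵀ)
          = ∑ k, ((∏ j, p (f j)) • Z (f k)) * μᵀ := by
      intro f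
      rw [Matrix.sum_mul, Finset.smul_sum]
      exact Finset.sum_congr rfl fun k _ => (Matrix.smul_mul _ _ _).symm
    have h2 : ∀ k : Fin K,
        (∑ f : Fin K → Fin m, ((∏ j, p (f j)) • Z (f k)) * μᵀ) = M := by
      intro k
      rw [← Matrix.sum_mul, E1 k, hM]
    rw [Finset.sum_congr rfl fun f _ => h1 f, Finset.sum_comm,
      Finset.sum_congr rfl fun k _ => h2 k,
      Finset.sum_const, Finset.card_univ, Fintype.card_fin,
      ← Nat.cast_smul_eq_nsmul (R := ℝ)]
  have hmuW : ∑ f : Fin K → Fin m,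
      (∏ j, p (f j)) • (μ * (∑ k, Z (f k))ᵀ) = (K:ℝ) • M := by
    have h1 : ∀ f : Fin K → Fin m,
        (∏ j, p (f j)) • (μ * (∑ k, Z (f k))ᵀ)
          = ∑ k, μ * ((∏ j, p (f j)) • Z (f k))ᵀ := by
      intro f
      rw [Matrix.transpose_sum, Matrix.mul_sum, Finset.smul_sum]
      exact Finset.sum_congr rfl fun k _ => by
        rw [Matrix.transpose_smul, Matrix.mul_smul]
    have h2 : ∀ k : Fin K,
        (∑ f : Fin K → Fin m, μ * ((∏ j, p (f j)) • Z (f k))ᵀ) = M := by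
      intro k
      rw [← Matrix.mul_sum, ← Matrix.transpose_sum, E1 k, hM]
    rw [Finset.sum_congr rfl fun f _ => h1 f, Finset.sum_comm,
      Finset.sum_congr rfl fun k _ => h2 k,
      Finset.sum_const, Finset.card_univ, Fintype.card_fin,
      ← Nat.cast_smul_eq_nsmul (R := ℝ)]
  -- the main identity
  have hE : (∑ f : Fin K → Fin m,
        (∏ k, p (f k)) •
          ((((K : ℝ)⁻¹ • ∑ k, Z (f k)) - μ) *
            (((K : ℝ)⁻¹ • ∑ k, Z (f k)) - μ)ᵀ))
      = (K:ℝ)⁻¹ • V - (K:ℝ)⁻¹ • M := by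
    rw [Finset.sum_congr rfl fun f _ => by rw [expand f]]
    simp only [smul_sub, smul_add, Finset.sum_sub_distrib, Finset.sum_add_distrib]
    simp_rw [smul_comm _ ((K:ℝ)⁻¹ * (K:ℝ)⁻¹), smul_comm _ ((K:ℝ)⁻¹),
      ← Finset.smul_sum]
    rw [hWW, hWmu, hmuW, ← Finset.sum_smul, hw1]
    match_scalars <;> field_simp <;> ring
  -- norm bounds
  have hTeq : ∀ i : Fin m, (Z i)ᵀ = (Z i)ᴴ :=
    fun i => (Matrix.conjTranspose_eq_transpose_of_trivial _).symm
  have normZ : ∀ i, ‖Z i‖ ≤ 1 := by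
    intro i
    have h1 : ‖(Z i)ᴴ * Z i‖ = ‖Z i‖ * ‖Z i‖ :=
      Matrix.l2_opNorm_conjTranspose_mul_self _
    rw [← hTeq i, hZ i] at h1
    have hone : ‖(1 : Matrix (Fin r) (Fin r) ℝ)‖ ≤ 1 := by
      rw [Matrix.cstar_norm_def, _root_.map_one]
      exact ContinuousLinearMap.norm_id_le
    nlinarith [norm_nonneg (Z i)]
  have normZT : ∀ i, ‖(Z i)ᵀ‖ ≤ 1 := by
    intro i
    rw [hTeq i, Matrix.l2_opNorm_conjTranspose]
    exact normZ i
  have normμ : ‖μ‖ ≤ 1 := by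
    rw [hμ]
    calc ‖∑ i, p i • Z i‖ ≤ ∑ i, ‖p i • Z i‖ := norm_sum_le _ _
      _ = ∑ i, p i * ‖Z i‖ := by
          refine Finset.sum_congr rfl fun i _ => ?_
          rw [norm_smul, Real.norm_eq_abs, abs_of_nonneg (hp i)]
      _ ≤ ∑ i, p i * 1 :=
          Finset.sum_le_sum fun i _ => mul_le_mul_of_nonneg_left (normZ i) (hp i)
      _ = 1 := by simpa using hpsum
  have normV : ‖V‖ ≤ 1 := by
    rw [hV]
    calc ‖∑ i, p i • (Z i * (Z i)ᵀ)‖ ≤ ∑ i, ‖p i • (Z i * (Z i)ᵀ)‖ := norm_sum_le _ _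
      _ = ∑ i, p i * ‖Z i * (Z i)ᵀ‖ := by
          refine Finset.sum_congr rfl fun i _ => ?_
          rw [norm_smul, Real.norm_eq_abs, abs_of_nonneg (hp i)]
      _ ≤ ∑ i, p i * 1 := by
          refine Finset.sum_le_sum fun i _ => mul_le_mul_of_nonneg_left ?_ (hp i)
          calc ‖Z i * (Z i)ᵀ‖ ≤ ‖Z i‖ * ‖(Z i)ᵀ‖ := Matrix.l2_opNorm_mul _ _
            _ ≤ 1 * 1 := by
                exact mul_le_mul (normZ i) (normZT i) (norm_nonneg _) zero_le_one
            _ = 1 := one_mul 1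
      _ = 1 := by simpa using hpsum
  have normM : ‖M‖ ≤ 1 := by
    rw [hM]
    calc ‖μ * μᵀ‖ ≤ ‖μ‖ * ‖μᵀ‖ := Matrix.l2_opNorm_mul _ _
      _ ≤ 1 * 1 := by
          refine mul_le_mul normμ ?_ (norm_nonneg _) zero_le_one
          rw [show μᵀ = μᴴ from (Matrix.conjTranspose_eq_transpose_of_trivial _).symm,
            Matrix.l2_opNorm_conjTranspose]
          exact normμ
      _ = 1 := one_mul 1
  have hspec : specNorm (∑ f : Fin K → Fin m,
        (∏ k, p (f k)) •
          ((((K : ℝ)⁻¹ • ∑ k, Z (f k)) - μ) *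
            (((K : ℝ)⁻¹ • ∑ k, Z (f k)) - μ)ᵀ))
      = ‖(K:ℝ)⁻¹ • V - (K:ℝ)⁻¹ • M‖ := by
    rw [← hE]; rfl
  have hKinv0 : (0:ℝ) ≤ (K:ℝ)⁻¹ := by positivity
  have hKinv1 : (K:ℝ)⁻¹ ≤ 1 := by
    rw [inv_le_one_iff₀]
    right
    exact_mod_cast hK
  have hbound : ‖(K:ℝ)⁻¹ • V - (K:ℝ)⁻¹ • M‖ ≤ (K:ℝ)⁻¹ + (K:ℝ)⁻¹ := by
    calc ‖(K:ℝ)⁻¹ • V - (K:ℝ)⁻¹ • M‖ ≤ ‖(K:ℝ)⁻¹ • V‖ + ‖(K:ℝ)⁻¹ • M‖ := norm_sub_le _ _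
      _ = (K:ℝ)⁻¹ * ‖V‖ + (K:ℝ)⁻¹ * ‖M‖ := by
          rw [norm_smul, norm_smul, Real.norm_eq_abs, abs_of_nonneg hKinv0]
      _ ≤ (K:ℝ)⁻¹ * 1 + (K:ℝ)⁻¹ * 1 := by
          gcongr
      _ = (K:ℝ)⁻¹ + (K:ℝ)⁻¹ := by ring
  -- arithmetic on the right-hand side
  have hsplit : (∑ i, ∑ j ∈ Finset.univ.erase i, p i * p j) + ∑ i, (p i) ^ 2 = 1 := by
    have h1 : (1:ℝ) = ∑ i, ∑ j, p i * p j := by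
      rw [← Finset.sum_mul_sum]
      rw [hpsum]; ring
    have h2 : ∀ i : Fin m, (∑ j, p i * p j)
        = (p i) ^ 2 + ∑ j ∈ Finset.univ.erase i, p i * p j := by
      intro i
      rw [← Finset.add_sum_erase _ _ (Finset.mem_univ i)]
      ring_nf
    rw [Finset.sum_congr rfl fun i _ => h2 i, Finset.sum_add_distrib] at h1
    linarith
  have hQ : (0:ℝ) ≤ ∑ i, (p i) ^ 2 :=
    Finset.sum_nonneg fun i _ => sq_nonneg _
  rw [hspec]
  refine le_trans hbound ?_
  nlinarith [mul_nonneg (sub_nonneg.mpr hKinv1) hQ]
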